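/- If a homogeneous form F of degree d in n variables is an s-fold direct sum, i.e. F = F_1 + ⋯ + F_s with each F_i ∈ S^d V_i nonzero and V = V_1 ⊕ ⋯ ⊕ V_s, then the apolar ideal F^⊥ has at least s − 1 minimal generators of degree d, i.e. dim_ℂ (F^⊥/mF^⊥)_d ≥ s − 1. -/

import Mathlib

/-!
Apolarity setup.  `S = ℂ[x_1,…,x_n]` and its dual ring `T = ℂ[α_1,…,α_n]` are both
realized as `MvPolynomial (Fin n) ℂ`; the apolarity action `Θ ⌟ F` (`contract Θ F`)
lets `α_i` act as the partial differentiation operator `∂/∂x_i`.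
-/

open MvPolynomial

noncomputable section Apolarity

/-- Partial derivatives on `ℂ[x_1,…,x_n]` commute. -/
lemma pderiv_pderiv_comm (n : ℕ) (i j : Fin n) (f : MvPolynomial (Fin n) ℂ) :
    pderiv i (pderiv j f) = pderiv j (pderiv i f) := by
  induction f using MvPolynomial.induction_on with
  | C a => simp
  | add p q hp hq => simp [hp, hq]
  | mul_X p k hp =>
    rcases eq_or_ne i k with rfl | hik
    · rcases eq_or_ne j i with rfl | hjk
      · rfl
      · simp only [pderiv_mul, pderiv_X_self, pderiv_X_of_ne hjk, pderiv_X_of_ne hjk.symm,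
          map_add, map_zero, map_one, Derivation.map_one_eq_zero, mul_one, mul_zero,
          add_zero, zero_add, hp]
    · rcases eq_or_ne j k with rfl | hjk
      · simp only [pderiv_mul, pderiv_X_self, pderiv_X_of_ne hik, pderiv_X_of_ne hik.symm,
          map_add, map_zero, map_one, Derivation.map_one_eq_zero, mul_one, mul_zero,
          add_zero, zero_add, hp]
      · simp only [pderiv_mul, pderiv_X_of_ne hik.symm, pderiv_X_of_ne hjk.symm, map_add,
          map_zero, mul_zero, add_zero, zero_add, hp]

variable (n : ℕ)

/-- The endomorphism `∂/∂x_i` of `S = ℂ[x_1,…,x_n]`. -/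
def derOp (i : Fin n) : Module.End ℂ (MvPolynomial (Fin n) ℂ) :=
  (pderiv i).toLinearMap

lemma derOp_commute (i j : Fin n) : Commute (derOp n i) (derOp n j) :=
  LinearMap.ext fun f => pderiv_pderiv_comm n i j f

/-- The commuting product of the operators `(∂/∂x_i)^(m i)`. -/
def piDiffHom : (Fin n → Multiplicative ℕ) →* Module.End ℂ (MvPolynomial (Fin n) ℂ) :=
  MonoidHom.noncommPiCoprod (fun i : Fin n => powersHom _ (derOp n i))
    (fun i j _ x y => ((derOp_commute n i j).pow_pow x y))

/-- The differential operator `∏ i, (∂/∂x_i)^(m i)` attached to an exponent vector `m`. -/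
def diffMonoidHom : Multiplicative (Fin n →₀ ℕ) →* Module.End ℂ (MvPolynomial (Fin n) ℂ) :=
  (piDiffHom n).comp
    (AddMonoidHom.toMultiplicative
      (Finsupp.coeFnAddHom : (Fin n →₀ ℕ) →+ (Fin n → ℕ)))

/-- The apolarity action of the dual ring `T = ℂ[α_1,…,α_n]` on `S = ℂ[x_1,…,x_n]`, as an
algebra homomorphism to differential operators: `α_i` acts as `∂/∂x_i`. -/
def apolarAlgHom :
    MvPolynomial (Fin n) ℂ →ₐ[ℂ] Module.End ℂ (MvPolynomial (Fin n) ℂ) :=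
  AddMonoidAlgebra.lift ℂ _ (Fin n →₀ ℕ) (diffMonoidHom n)

variable {n}

/-- The apolarity action `Θ ⌟ F`: apply to `F` the differential operator obtained from `Θ`
by substituting `∂/∂x_i` for the `i`-th (dual) variable. -/
def contract (Θ F : MvPolynomial (Fin n) ℂ) : MvPolynomial (Fin n) ℂ :=
  apolarAlgHom n Θ F

lemma apolarAlgHom_X (i : Fin n) : apolarAlgHom n (X i) = derOp n i := by
  classical
  have hX : (X i : MvPolynomial (Fin n) ℂ)
      = AddMonoidAlgebra.single (Finsupp.single i 1) (1 : ℂ) := rfl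
  rw [hX]
  rw [show apolarAlgHom n (AddMonoidAlgebra.single (Finsupp.single i 1) (1:ℂ))
      = (1:ℂ) • diffMonoidHom n (Multiplicative.ofAdd (Finsupp.single i 1)) from
    AddMonoidAlgebra.lift_single _ _ _]
  rw [one_smul]
  change piDiffHom n ((AddMonoidHom.toMultiplicative
        (Finsupp.coeFnAddHom : (Fin n →₀ ℕ) →+ (Fin n → ℕ)))
        (Multiplicative.ofAdd (Finsupp.single i 1))) = derOp n i
  have harg : (AddMonoidHom.toMultiplicative
        (Finsupp.coeFnAddHom : (Fin n →₀ ℕ) →+ (Fin n → ℕ)))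
        (Multiplicative.ofAdd (Finsupp.single i 1))
      = Pi.mulSingle (M := fun _ : Fin n => Multiplicative ℕ) i (Multiplicative.ofAdd 1) := by
    funext j
    rcases eq_or_ne j i with rfl | hj
    · show Multiplicative.ofAdd ((Finsupp.single j 1 : Fin n →₀ ℕ) j)
        = Pi.mulSingle (M := fun _ : Fin n => Multiplicative ℕ) j (Multiplicative.ofAdd 1) j
      rw [Finsupp.single_eq_same, Pi.mulSingle_eq_same]
    · show Multiplicative.ofAdd ((Finsupp.single i 1 : Fin n →₀ ℕ) j)
        = Pi.mulSingle (M := fun _ : Fin n => Multiplicative ℕ) i (Multiplicative.ofAdd 1) j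
      rw [Finsupp.single_eq_of_ne hj, Pi.mulSingle_eq_of_ne hj]
      exact ofAdd_zero
  refine (congrArg (piDiffHom n) harg).trans ?_
  rw [piDiffHom]
  exact (MonoidHom.noncommPiCoprod_mulSingle _ i _).trans rfl

/-- Sanity check: the dual variable `α_i` acts on `F` as `∂F/∂x_i`. -/
@[simp] lemma contract_X (i : Fin n) (F : MvPolynomial (Fin n) ℂ) :
    contract (X i) F = pderiv i F := by
  rw [contract, apolarAlgHom_X]; rfl

/-- The apolar (annihilator) ideal `F^⊥ = {Θ ∈ T : Θ ⌟ F = 0}` of a polynomial `F`. -/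
def apolarIdeal (F : MvPolynomial (Fin n) ℂ) : Ideal (MvPolynomial (Fin n) ℂ) where
  carrier := {Θ | contract Θ F = 0}
  zero_mem' := by simp [contract]
  add_mem' := by
    intro a b ha hb
    simp only [Set.mem_setOf_eq, contract, map_add, LinearMap.add_apply] at *
    rw [ha, hb, add_zero]
  smul_mem' := by
    intro c x hx
    simp only [Set.mem_setOf_eq, smul_eq_mul, contract, map_mul, Module.End.mul_apply] at *
    rw [hx, map_zero]

@[simp] lemma mem_apolarIdeal {Θ F : MvPolynomial (Fin n) ℂ} :
    Θ ∈ apolarIdeal F ↔ contract Θ F = 0 := Iff.rfl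

variable (n)

/-- The irrelevant maximal ideal `m = ⟨α_1,…,α_n⟩` of `T`. -/
def irrIdeal : Ideal (MvPolynomial (Fin n) ℂ) :=
  Ideal.span (Set.range X)

variable {n}

/-- The homogeneous ideal `I` has a minimal generator of degree `k`, i.e. `(I/mI)_k ≠ 0`:
there is a homogeneous element of `I` of degree `k` not belonging to `m * I`. -/
def HasMinGenOfDegree (I : Ideal (MvPolynomial (Fin n) ℂ)) (k : ℕ) : Prop :=
  ∃ Θ, Θ ∈ I ∧ Θ.IsHomogeneous k ∧ Θ ∉ irrIdeal n * I

/-- The homogeneous ideal `I` has at least `r` minimal generators of degree `k`, i.e.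
`dim_ℂ (I/mI)_k ≥ r`: there are `r` homogeneous degree-`k` elements of `I` that are
linearly independent modulo `m * I`. -/
def MinGensAtLeast (I : Ideal (MvPolynomial (Fin n) ℂ)) (k r : ℕ) : Prop :=
  ∃ Θ : Fin r → MvPolynomial (Fin n) ℂ,
    (∀ i, Θ i ∈ I ∧ (Θ i).IsHomogeneous k) ∧
    ∀ c : Fin r → ℂ, (∑ i, c i • Θ i) ∈ irrIdeal n * I → ∀ i, c i = 0

/-- `F` is an `s`-fold direct sum of degree `d`: `F = F_1 + ⋯ + F_s` where the `F_i` are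
nonzero degree-`d` forms in independent subspaces `V_i` of the space of linear forms with
`V = V_1 ⊕ ⋯ ⊕ V_s` (i.e. in disjoint sets of variables, up to linear change of variables;
`F_i ∈ S^d V_i` is expressed as membership in the subalgebra generated by `V_i`). -/
def IsSFoldDirectSum (F : MvPolynomial (Fin n) ℂ) (d s : ℕ) : Prop :=
  ∃ (V : Fin s → Submodule ℂ (MvPolynomial (Fin n) ℂ))
    (G : Fin s → MvPolynomial (Fin n) ℂ),
    (∀ i, V i ≤ homogeneousSubmodule (Fin n) ℂ 1) ∧
    iSupIndep V ∧
    (⨆ i, V i) = homogeneousSubmodule (Fin n) ℂ 1 ∧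
    (∀ i, G i ≠ 0 ∧ (G i).IsHomogeneous d ∧ G i ∈ Algebra.adjoin ℂ (V i : Set _)) ∧
    F = ∑ i, G i

/-- `F` is a direct sum: `F = F₁ + F₂` with `F₁ ∈ S^d V₁`, `F₂ ∈ S^d V₂` nonzero and
`V = V₁ ⊕ V₂`. -/
def IsDirectSum (F : MvPolynomial (Fin n) ℂ) (d : ℕ) : Prop :=
  IsSFoldDirectSum F d 2

/-- `F` is a limit (as `t → 0`) of `s`-fold direct sums of degree `d`. -/
def IsLimitOfSFoldDirectSums (F : MvPolynomial (Fin n) ℂ) (d s : ℕ) : Prop :=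
  ∃ G : ℂ → MvPolynomial (Fin n) ℂ,
    (∀ t : ℂ, t ≠ 0 → IsSFoldDirectSum (G t) d s) ∧
    ∀ m : Fin n →₀ ℕ,
      Filter.Tendsto (fun t => MvPolynomial.coeff m (G t))
        (nhdsWithin (0 : ℂ) {(0 : ℂ)}ᶜ) (nhds (MvPolynomial.coeff m F))

/-- `F` is a limit of direct sums. -/
def IsLimitOfDirectSums (F : MvPolynomial (Fin n) ℂ) (d : ℕ) : Prop :=
  IsLimitOfSFoldDirectSums F d 2

/-- `F` is concise: `(F^⊥)_1 = 0`, i.e. `F` cannot be written using fewer variables. -/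
def Concise (F : MvPolynomial (Fin n) ℂ) : Prop :=
  ∀ Θ : MvPolynomial (Fin n) ℂ, Θ.IsHomogeneous 1 → contract Θ F = 0 → Θ = 0

end Apolarity
noncomputable section Aux
open MvPolynomial

variable {n : ℕ}

/-- The differential operator attached to an exponent vector. -/
def opOf (n : ℕ) (b : Fin n →₀ ℕ) : Module.End ℂ (MvPolynomial (Fin n) ℂ) :=
  diffMonoidHom n (Multiplicative.ofAdd b)

lemma opOf_zero : opOf n 0 = 1 := map_one (diffMonoidHom n)

lemma opOf_add (a b : Fin n →₀ ℕ) : opOf n (a + b) = opOf n a * opOf n b :=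
  map_mul (diffMonoidHom n) _ _

lemma opOf_single (i : Fin n) (t : ℕ) : opOf n (Finsupp.single i t) = derOp n i ^ t := by
  rw [opOf]
  change piDiffHom n ((AddMonoidHom.toMultiplicative
        (Finsupp.coeFnAddHom : (Fin n →₀ ℕ) →+ (Fin n → ℕ)))
        (Multiplicative.ofAdd (Finsupp.single i t))) = derOp n i ^ t
  have harg : (AddMonoidHom.toMultiplicative
        (Finsupp.coeFnAddHom : (Fin n →₀ ℕ) →+ (Fin n → ℕ)))
        (Multiplicative.ofAdd (Finsupp.single i t))
      = Pi.mulSingle (M := fun _ : Fin n => Multiplicative ℕ) i (Multiplicative.ofAdd t) := by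
    funext j
    rcases eq_or_ne j i with rfl | hj
    · show Multiplicative.ofAdd ((Finsupp.single j t : Fin n →₀ ℕ) j)
        = Pi.mulSingle (M := fun _ : Fin n => Multiplicative ℕ) j (Multiplicative.ofAdd t) j
      rw [Finsupp.single_eq_same, Pi.mulSingle_eq_same]
    · show Multiplicative.ofAdd ((Finsupp.single i t : Fin n →₀ ℕ) j)
        = Pi.mulSingle (M := fun _ : Fin n => Multiplicative ℕ) i (Multiplicative.ofAdd t) j
      rw [Finsupp.single_eq_of_ne' (Ne.symm hj), Pi.mulSingle_eq_of_ne hj]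
      exact ofAdd_zero
  refine (congrArg (piDiffHom n) harg).trans ?_
  rw [piDiffHom]
  exact (MonoidHom.noncommPiCoprod_mulSingle _ i _).trans rfl

lemma contract_monomial (b : Fin n →₀ ℕ) (c : ℂ) (F : MvPolynomial (Fin n) ℂ) :
    contract (monomial b c) F = c • opOf n b F := by
  have h : apolarAlgHom n (monomial b c)
      = c • diffMonoidHom n (Multiplicative.ofAdd b) := AddMonoidAlgebra.lift_single _ _ _
  show (apolarAlgHom n (monomial b c)) F = c • (opOf n b) F
  rw [h]
  rfl

lemma contract_add_left (a b F : MvPolynomial (Fin n) ℂ) :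
    contract (a + b) F = contract a F + contract b F := by
  show (apolarAlgHom n (a+b)) F = _
  rw [map_add, LinearMap.add_apply]; rfl

lemma contract_smul_left (c : ℂ) (a F : MvPolynomial (Fin n) ℂ) :
    contract (c • a) F = c • contract a F := by
  show (apolarAlgHom n (c • a)) F = _
  rw [map_smul, LinearMap.smul_apply]; rfl

lemma contract_sum_left {ι : Type*} (s : Finset ι) (f : ι → MvPolynomial (Fin n) ℂ)
    (F : MvPolynomial (Fin n) ℂ) :
    contract (∑ i ∈ s, f i) F = ∑ i ∈ s, contract (f i) F := by
  show (apolarAlgHom n (∑ i ∈ s, f i)) F = _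
  rw [map_sum, LinearMap.sum_apply]; rfl

lemma contract_sub_left (a b F : MvPolynomial (Fin n) ℂ) :
    contract (a - b) F = contract a F - contract b F := by
  show (apolarAlgHom n (a - b)) F = _
  rw [map_sub, LinearMap.sub_apply]; rfl

lemma contract_mul (a b F : MvPolynomial (Fin n) ℂ) :
    contract (a * b) F = contract a (contract b F) := by
  show (apolarAlgHom n (a * b)) F = _
  rw [map_mul, Module.End.mul_apply]; rfl

lemma contract_sum_right {ι : Type*} (s : Finset ι) (Θ : MvPolynomial (Fin n) ℂ)
    (f : ι → MvPolynomial (Fin n) ℂ) :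
    contract Θ (∑ i ∈ s, f i) = ∑ i ∈ s, contract Θ (f i) :=
  map_sum (apolarAlgHom n Θ) _ _

end Aux
section Aux2
open MvPolynomial

variable {n : ℕ}

lemma coeff_pderiv (i : Fin n) (m : Fin n →₀ ℕ) (f : MvPolynomial (Fin n) ℂ) :
    coeff m (pderiv i f) = ((m i : ℂ) + 1) * coeff (m + Finsupp.single i 1) f := by
  classical
  induction f using MvPolynomial.induction_on' with
  | add p q hp hq => simp [hp, hq, mul_add]
  | monomial b a =>
    rw [pderiv_monomial, coeff_monomial, coeff_monomial]
    rcases eq_or_ne b (m + Finsupp.single i 1) with rfl | h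
    · rw [if_pos (add_tsub_cancel_right m (Finsupp.single i 1)), if_pos rfl]
      have hmi : (m + Finsupp.single i (1:ℕ)) i = m i + 1 := by
        rw [Finsupp.add_apply, Finsupp.single_eq_same]
      rw [hmi]; push_cast; ring
    · rw [if_neg h, mul_zero]
      by_cases h2 : b - Finsupp.single i 1 = m
      · rw [if_pos h2]
        have hbi : b i = 0 := by
          by_contra hbi
          apply h
          have hle : Finsupp.single i 1 ≤ b := by
            rw [Finsupp.single_le_iff]; omega
          rw [← h2, tsub_add_cancel_of_le hle]
        rw [hbi]
        push_cast
        ring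
      · rw [if_neg h2]

lemma coeff_derOp_pow (i : Fin n) (t : ℕ) (f : MvPolynomial (Fin n) ℂ) (m : Fin n →₀ ℕ) :
    coeff m ((derOp n i ^ t) f)
      = ((m i + t).descFactorial t : ℂ) * coeff (m + Finsupp.single i t) f := by
  induction t generalizing f m with
  | zero => simp
  | succ t ih =>
    have hstep : (derOp n i ^ (t + 1)) f = (derOp n i ^ t) (pderiv i f) := by
      rw [pow_succ, Module.End.mul_apply]; rfl
    rw [hstep, ih, _root_.coeff_pderiv]
    have h1 : (m + Finsupp.single i t) i = m i + t := by
      rw [Finsupp.add_apply, Finsupp.single_eq_same]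
    have h2 : m + Finsupp.single i t + Finsupp.single i 1 = m + Finsupp.single i (t + 1) := by
      rw [add_assoc, ← Finsupp.single_add]
    rw [h1, h2]
    have h3 : ((m i + (t + 1)).descFactorial (t + 1) : ℂ)
        = ((m i + t).descFactorial t : ℂ) * ((m i + t : ℕ) + 1) := by
      have h4 : (m i + (t + 1)).descFactorial (t + 1)
          = (m i + t + 1) * (m i + t).descFactorial t := by
        have := Nat.succ_descFactorial_succ (m i + t) t
        simpa [Nat.add_assoc] using this
      rw [h4]; push_cast; ring
    rw [h3]; push_cast; ring

lemma coeff_opOf (b : Fin n →₀ ℕ) (F : MvPolynomial (Fin n) ℂ) (m : Fin n →₀ ℕ) :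
    coeff m (opOf n b F)
      = (∏ j, ((m j + b j).descFactorial (b j) : ℂ)) * coeff (m + b) F := by
  classical
  induction b using Finsupp.induction generalizing m with
  | zero => simp [opOf_zero]
  | single_add i t b' hib ht ih =>
    have hb'i : b' i = 0 := Finsupp.notMem_support_iff.mp hib
    have hsplit : opOf n (Finsupp.single i t + b') F = (derOp n i ^ t) (opOf n b' F) := by
      rw [opOf_add, opOf_single, Module.End.mul_apply]
    rw [hsplit, coeff_derOp_pow, ih]
    have hexp : m + Finsupp.single i t + b' = m + (Finsupp.single i t + b') := add_assoc _ _ _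
    rw [hexp, ← mul_assoc]
    congr 1
    have lhs_eq : ∀ j : Fin n, j ≠ i →
        (((m + Finsupp.single i t) j + b' j).descFactorial (b' j) : ℂ)
          = ((m j + (Finsupp.single i t + b') j).descFactorial
              ((Finsupp.single i t + b') j) : ℂ) := by
      intro j hj
      rw [Finsupp.add_apply, Finsupp.add_apply, Finsupp.single_eq_of_ne' (Ne.symm hj)]
      norm_num
    rw [← Finset.mul_prod_erase Finset.univ
          (fun j => (((m + Finsupp.single i t) j + b' j).descFactorial (b' j) : ℂ))
          (Finset.mem_univ i),
        ← Finset.mul_prod_erase Finset.univ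
          (fun j => ((m j + (Finsupp.single i t + b') j).descFactorial
              ((Finsupp.single i t + b') j) : ℂ))
          (Finset.mem_univ i)]
    have e1 : (((m + Finsupp.single i t) i + b' i).descFactorial (b' i) : ℂ) = 1 := by
      rw [hb'i]; norm_num
    have e2 : ((m i + (Finsupp.single i t + b') i).descFactorial
        ((Finsupp.single i t + b') i) : ℂ) = ((m i + t).descFactorial t : ℂ) := by
      rw [Finsupp.add_apply, Finsupp.single_eq_same, hb'i, add_zero]
    rw [e1, e2, one_mul]
    congr 1
    apply Finset.prod_congr rfl
    intro j hj
    exact lhs_eq j (Finset.ne_of_mem_erase hj)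

end Aux2
section Aux3
open MvPolynomial

variable {n : ℕ}

lemma contract_eq_sum (Θ F : MvPolynomial (Fin n) ℂ) :
    contract Θ F = ∑ b ∈ Θ.support, coeff b Θ • opOf n b F := by
  conv_lhs => rw [Θ.as_sum]
  rw [contract_sum_left]
  apply Finset.sum_congr rfl
  intro b _
  rw [contract_monomial]

lemma coeff_contract (Θ F : MvPolynomial (Fin n) ℂ) (m : Fin n →₀ ℕ) :
    coeff m (contract Θ F)
      = ∑ b ∈ Θ.support, coeff b Θ *
          ((∏ j, ((m j + b j).descFactorial (b j) : ℂ)) * coeff (m + b) F) := by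
  conv_lhs => rw [Θ.as_sum]
  rw [contract_sum_left, coeff_sum]
  apply Finset.sum_congr rfl
  intro b _
  rw [contract_monomial, coeff_smul, smul_eq_mul, coeff_opOf]

lemma degree_of_coeff_contract_ne_zero {Θ F : MvPolynomial (Fin n) ℂ} {e k : ℕ}
    (hΘ : Θ.IsHomogeneous e) (hF : F.IsHomogeneous k) {m : Fin n →₀ ℕ}
    (h : coeff m (contract Θ F) ≠ 0) : m.degree + e = k := by
  rw [coeff_contract] at h
  obtain ⟨b, hb, hne⟩ := Finset.exists_ne_zero_of_sum_ne_zero h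
  have h1 : coeff b Θ ≠ 0 := fun h0 => hne (by rw [h0, zero_mul])
  have h2 : coeff (m + b) F ≠ 0 := fun h0 => hne (by rw [h0, mul_zero, mul_zero])
  have hbe : b.degree = e := by
    rw [Finsupp.degree_eq_weight_one]; exact hΘ h1
  have hmk : (m + b).degree = k := by
    rw [Finsupp.degree_eq_weight_one]; exact hF h2
  have hdadd : (m + b).degree = m.degree + b.degree := by
    simp only [Finsupp.degree_eq_weight_one]
    exact map_add _ m b
  rw [hdadd, hbe] at hmk
  exact hmk

lemma contract_isHomogeneous {Θ F : MvPolynomial (Fin n) ℂ} {e k : ℕ}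
    (hΘ : Θ.IsHomogeneous e) (hF : F.IsHomogeneous k) :
    (contract Θ F).IsHomogeneous (k - e) := by
  intro m hm
  have := degree_of_coeff_contract_ne_zero hΘ hF hm
  rw [show (1 : Fin n → ℕ) = fun _ => 1 from rfl, ← Finsupp.degree_eq_weight_one]
  omega

lemma contract_eq_zero_of_lt {Θ F : MvPolynomial (Fin n) ℂ} {e k : ℕ}
    (hΘ : Θ.IsHomogeneous e) (hF : F.IsHomogeneous k) (h : k < e) :
    contract Θ F = 0 := by
  ext m
  rw [coeff_zero]
  by_contra hc
  have := degree_of_coeff_contract_ne_zero hΘ hF hc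
  omega

lemma contract_eq_C {Θ F : MvPolynomial (Fin n) ℂ} {k : ℕ}
    (hΘ : Θ.IsHomogeneous k) (hF : F.IsHomogeneous k) :
    contract Θ F = C (coeff 0 (contract Θ F)) := by
  ext m
  rcases eq_or_ne m 0 with rfl | hm
  · rw [coeff_C, if_pos rfl]
  · rw [coeff_C, if_neg (Ne.symm hm)]
    by_contra hc
    have := degree_of_coeff_contract_ne_zero hΘ hF hc
    have : m.degree = 0 := by omega
    exact hm ((Finsupp.degree_eq_zero_iff m).mp this)

lemma homogeneousSubmodule_one_le_span :
    homogeneousSubmodule (Fin n) ℂ 1 ≤ Submodule.span ℂ (Set.range (X : Fin n → _)) := by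
  intro v hv
  rw [mem_homogeneousSubmodule] at hv
  have key : (∑ m ∈ v.support, monomial m (coeff m v)) ∈
      Submodule.span ℂ (Set.range (X : Fin n → _)) := by
    apply Submodule.sum_mem
    intro m hm
    have hd : m.degree = 1 := by
      rw [Finsupp.degree_eq_weight_one]
      exact hv (mem_support_iff.mp hm)
    obtain ⟨k, rfl⟩ : ∃ k, m = Finsupp.single k 1 := by
      have hne : m ≠ 0 := by
        intro h0; rw [h0, map_zero] at hd; omega
      obtain ⟨k, hk⟩ := Finsupp.support_nonempty_iff.mpr hne
      have hk1 : 1 ≤ m k := Nat.one_le_iff_ne_zero.mpr (Finsupp.mem_support_iff.mp hk)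
      have hsum : m k + ∑ j ∈ m.support.erase k, m j = 1 := by
        rw [Finset.add_sum_erase _ _ hk]; exact hd
      have hmk : m k = 1 := by
        have hnn : 0 ≤ ∑ j ∈ m.support.erase k, m j := Nat.zero_le _
        omega
      have hs0 : ∑ j ∈ m.support.erase k, m j = 0 := by omega
      have hz : ∀ j ∈ m.support.erase k, m j = 0 := by
        intro j hj
        exact Finset.sum_eq_zero_iff.mp hs0 j hj
      refine ⟨k, Finsupp.ext fun j => ?_⟩
      rcases eq_or_ne j k with rfl | hj
      · rw [hmk, Finsupp.single_eq_same]
      · rw [Finsupp.single_eq_of_ne' (Ne.symm hj)]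
        by_cases hjs : j ∈ m.support
        · exact hz j (Finset.mem_erase.mpr ⟨hj, hjs⟩)
        · exact Finsupp.notMem_support_iff.mp hjs
    have hmon : (monomial (Finsupp.single k 1)) (coeff (Finsupp.single k 1) v)
        = coeff (Finsupp.single k 1) v • X k := by
      rw [X, smul_monomial, smul_eq_mul, mul_one]
    rw [hmon]
    exact Submodule.smul_mem _ _ (Submodule.subset_span ⟨k, rfl⟩)
  rwa [← v.as_sum] at key

lemma constantCoeff_of_mem_irr {θ : MvPolynomial (Fin n) ℂ} (h : θ ∈ irrIdeal n) :
    coeff 0 θ = 0 := by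
  have hle : irrIdeal n ≤ RingHom.ker (constantCoeff (σ := Fin n) (R := ℂ)) := by
    rw [irrIdeal, Ideal.span_le]
    rintro _ ⟨i, rfl⟩
    simp [RingHom.mem_ker]
  have := hle h
  rwa [RingHom.mem_ker, constantCoeff_eq] at this

end Aux3
section Aux4
open MvPolynomial

variable {n : ℕ}

lemma pderiv_mem_adjoin {V : Submodule ℂ (MvPolynomial (Fin n) ℂ)}
    (hV : V ≤ homogeneousSubmodule (Fin n) ℂ 1) (i : Fin n)
    {x : MvPolynomial (Fin n) ℂ} (hx : x ∈ Algebra.adjoin ℂ (V : Set _)) :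
    pderiv i x ∈ Algebra.adjoin ℂ (V : Set _) := by
  induction hx using Algebra.adjoin_induction with
  | mem v hv =>
    have hv1 : (v : MvPolynomial (Fin n) ℂ).IsHomogeneous 1 :=
      (mem_homogeneousSubmodule _ _).mp (hV hv)
    have : pderiv i v = contract (X i) v := (contract_X i v).symm
    rw [this, contract_eq_C (isHomogeneous_X ℂ i) hv1, ← algebraMap_eq]
    exact Subalgebra.algebraMap_mem _ _
  | algebraMap r =>
    rw [algebraMap_eq, pderiv_C]
    exact Subalgebra.zero_mem _
  | add x y hx hy ihx ihy =>
    rw [map_add]; exact Subalgebra.add_mem _ ihx ihy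
  | mul x y hx hy ihx ihy =>
    rw [pderiv_mul]
    exact Subalgebra.add_mem _ (Subalgebra.mul_mem _ ihx hy) (Subalgebra.mul_mem _ hx ihy)

lemma derOp_pow_mem_adjoin {V : Submodule ℂ (MvPolynomial (Fin n) ℂ)}
    (hV : V ≤ homogeneousSubmodule (Fin n) ℂ 1) (i : Fin n) (t : ℕ)
    {x : MvPolynomial (Fin n) ℂ} (hx : x ∈ Algebra.adjoin ℂ (V : Set _)) :
    (derOp n i ^ t) x ∈ Algebra.adjoin ℂ (V : Set _) := by
  induction t generalizing x with
  | zero => simpa using hx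
  | succ t ih =>
    have hstep : (derOp n i ^ (t + 1)) x = (derOp n i ^ t) (pderiv i x) := by
      rw [pow_succ, Module.End.mul_apply]; rfl
    rw [hstep]
    exact ih (pderiv_mem_adjoin hV i hx)

lemma contract_mem_adjoin {V : Submodule ℂ (MvPolynomial (Fin n) ℂ)}
    (hV : V ≤ homogeneousSubmodule (Fin n) ℂ 1) (Θ : MvPolynomial (Fin n) ℂ)
    {x : MvPolynomial (Fin n) ℂ} (hx : x ∈ Algebra.adjoin ℂ (V : Set _)) :
    contract Θ x ∈ Algebra.adjoin ℂ (V : Set _) := by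
  have hop : ∀ b : Fin n →₀ ℕ, opOf n b x ∈ Algebra.adjoin ℂ (V : Set _) := by
    intro b
    induction b using Finsupp.induction generalizing x with
    | zero => simpa [opOf_zero] using hx
    | single_add i t b' hib ht ih =>
      have hsplit : opOf n (Finsupp.single i t + b') x = (derOp n i ^ t) (opOf n b' x) := by
        rw [opOf_add, opOf_single, Module.End.mul_apply]
      rw [hsplit]
      exact derOp_pow_mem_adjoin hV i t (ih hx)
  rw [contract_eq_sum]
  apply Subalgebra.sum_mem
  intro b _
  exact Subalgebra.smul_mem _ (hop b) _

/-- Existence of a projection endomorphism. -/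
lemma exists_proj {s : ℕ} (V : Fin s → Submodule ℂ (MvPolynomial (Fin n) ℂ))
    (h1 : ∀ i, V i ≤ homogeneousSubmodule (Fin n) ℂ 1) (hind : iSupIndep V) (i : Fin s) :
    ∃ P : MvPolynomial (Fin n) ℂ →ₐ[ℂ] MvPolynomial (Fin n) ℂ,
      (∀ x ∈ Algebra.adjoin ℂ ((V i : Set (MvPolynomial (Fin n) ℂ))), P x = x) ∧
      (∀ j, j ≠ i → ∀ x ∈ Algebra.adjoin ℂ ((V j : Set (MvPolynomial (Fin n) ℂ))),
        ∃ c : ℂ, P x = C c) ∧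
      (∀ (k : ℕ) (q : MvPolynomial (Fin n) ℂ), q.IsHomogeneous k → (P q).IsHomogeneous k) := by
  classical
  set S := MvPolynomial (Fin n) ℂ
  set W : Submodule ℂ S := ⨆ (j) (_ : j ≠ i), V j with hW
  have hdis : Disjoint (V i) W := hind i
  obtain ⟨Cc, hCc⟩ := Submodule.exists_isCompl (V i ⊔ W)
  set U : Submodule ℂ S := W ⊔ Cc with hU
  have hcompl : IsCompl (V i) U := by
    constructor
    · rw [Submodule.disjoint_def]
      intro v hv hvU
      rw [hU, Submodule.mem_sup] at hvU
      obtain ⟨w, hw, c, hc, hwc⟩ := hvU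
      have hcVW : c ∈ V i ⊔ W := by
        have : c = v - w := by rw [← hwc]; ring
        rw [this]
        exact Submodule.sub_mem _ (Submodule.mem_sup_left hv) (Submodule.mem_sup_right hw)
      have hc0 : c = 0 := Submodule.disjoint_def.mp hCc.disjoint c hcVW hc
      rw [hc0, add_zero] at hwc
      subst hwc
      exact Submodule.disjoint_def.mp hdis w hv hw
    · rw [codisjoint_iff]
      rw [hU, ← sup_assoc]
      rw [← codisjoint_iff.mp hCc.codisjoint]
  set proj := Submodule.linearProjOfIsCompl (V i) U hcompl
  set q : S →ₗ[ℂ] S := (V i).subtype.comp proj with hq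
  set af : Fin n → S := fun k => q (X k) with haf
  set P : S →ₐ[ℂ] S := aeval af with hP
  have hafmem : ∀ k, af k ∈ V i := fun k => Submodule.coe_mem _
  have hkey0 : ∀ v ∈ Submodule.span ℂ (Set.range (X : Fin n → S)), P v = q v := by
    intro v hv'
    induction hv' using Submodule.span_induction with
    | mem x hx => obtain ⟨k, rfl⟩ := hx; rw [hP]; rw [aeval_X]
    | zero => rw [map_zero, map_zero]
    | add x y hx hy ihx ihy => rw [map_add, map_add, ihx, ihy]
    | smul c x hx ihx => rw [map_smul, map_smul, ihx]
  have hkey : ∀ v ∈ homogeneousSubmodule (Fin n) ℂ 1, P v = q v :=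
    fun v hv => hkey0 v (homogeneousSubmodule_one_le_span hv)
  have hfix : ∀ x ∈ Algebra.adjoin ℂ ((V i : Set S)), P x = x := by
    intro x hx
    induction hx using Algebra.adjoin_induction with
    | mem v hv =>
      rw [hkey v (h1 i hv)]
      show ((proj v : V i) : S) = v
      rw [show proj v = ⟨v, hv⟩ from Submodule.linearProjOfIsCompl_apply_left hcompl ⟨v, hv⟩]
    | algebraMap r => exact P.commutes r
    | add x y hx hy ihx ihy => rw [map_add, ihx, ihy]
    | mul x y hx hy ihx ihy => rw [map_mul, ihx, ihy]
  have hkill0 : ∀ j, j ≠ i → ∀ v ∈ V j, P v = 0 := by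
    intro j hj v hv
    rw [hkey v (h1 j hv)]
    have hVjW : V j ≤ W := by
      rw [hW]
      exact le_iSup_of_le j (le_iSup (fun _ : j ≠ i => V j) hj)
    have hvU : v ∈ U := Submodule.mem_sup_left (hVjW hv)
    show ((proj v : V i) : S) = 0
    rw [show proj v = 0 from Submodule.linearProjOfIsCompl_apply_right' hcompl hvU]
    rfl
  have hkill : ∀ j, j ≠ i → ∀ x ∈ Algebra.adjoin ℂ ((V j : Set S)), ∃ c : ℂ, P x = C c := by
    intro j hj x hx
    have hmem : P x ∈ (⊥ : Subalgebra ℂ S) := by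
      have h2 : P x ∈ (Algebra.adjoin ℂ ((V j : Set S))).map P := ⟨x, hx, rfl⟩
      rw [AlgHom.map_adjoin] at h2
      have h3 : Algebra.adjoin ℂ (P '' (V j : Set S)) ≤ ⊥ := by
        apply Algebra.adjoin_le
        rintro _ ⟨v, hv, rfl⟩
        rw [hkill0 j hj v hv]
        exact Subalgebra.zero_mem _
      exact h3 h2
    obtain ⟨c, hc⟩ := Algebra.mem_bot.mp hmem
    exact ⟨c, by rw [← hc, algebraMap_eq]⟩
  have hhomog : ∀ (k : ℕ) (q' : MvPolynomial (Fin n) ℂ),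
      q'.IsHomogeneous k → (P q').IsHomogeneous k := by
    intro k q' hq'
    have hres := hq'.aeval af
      (fun j => (mem_homogeneousSubmodule _ _).mp (h1 i (hafmem j)))
    rw [one_mul] at hres
    exact hres
  exact ⟨P, hfix, hkill, hhomog⟩

end Aux4
section Aux5
open MvPolynomial

variable {n : ℕ}

lemma contract_zero_left (F : MvPolynomial (Fin n) ℂ) : contract 0 F = 0 := by
  show (apolarAlgHom n 0) F = 0
  rw [map_zero]; rfl

lemma indep_sum_eq_zero {s : ℕ} (V : Fin s → Submodule ℂ (MvPolynomial (Fin n) ℂ))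
    (h1 : ∀ i, V i ≤ homogeneousSubmodule (Fin n) ℂ 1) (hind : iSupIndep V)
    {k : ℕ} (hk : k ≠ 0) (H : Fin s → MvPolynomial (Fin n) ℂ)
    (hmem : ∀ j, H j ∈ Algebra.adjoin ℂ ((V j : Set (MvPolynomial (Fin n) ℂ))))
    (hhom : ∀ j, (H j).IsHomogeneous k)
    (hsum : ∑ j, H j = 0) (i : Fin s) : H i = 0 := by
  classical
  obtain ⟨P, hfix, hkill, hhomog⟩ := exists_proj V h1 hind i
  have h0 : ∑ j, P (H j) = 0 := by rw [← map_sum, hsum, map_zero]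
  rw [← Finset.add_sum_erase Finset.univ _ (Finset.mem_univ i)] at h0
  have hz : ∀ j ∈ Finset.univ.erase i, P (H j) = 0 := by
    intro j hj
    have hji : j ≠ i := Finset.ne_of_mem_erase hj
    obtain ⟨c, hc⟩ := hkill j hji (H j) (hmem j)
    have hch : (C c : MvPolynomial (Fin n) ℂ).IsHomogeneous k :=
      hc ▸ hhomog k (H j) (hhom j)
    have hc0 : c = 0 := by
      have hcz := hch.coeff_eq_zero (d := 0) (by rw [map_zero]; omega)
      rwa [coeff_C, if_pos rfl] at hcz
    rw [hc, hc0, map_zero]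
  rw [Finset.sum_eq_zero hz, add_zero, hfix (H i) (hmem i)] at h0
  exact h0

end Aux5
open MvPolynomial

/-- If a homogeneous form `F` of degree `d` in `n` variables is an
`s`-fold direct sum, then `F^⊥` has at least `s - 1` minimal generators of degree `d`. -/
theorem sfold_direct_sum_min_generators
    (n d s : ℕ) (hd : 1 ≤ d) (F : MvPolynomial (Fin n) ℂ)
    (hF : F.IsHomogeneous d) (hDS : IsSFoldDirectSum F d s) :
    MinGensAtLeast (apolarIdeal F) d (s - 1) := by
  classical
  rcases Nat.eq_zero_or_pos s with rfl | hs
  · exact ⟨fun _ => 0, fun i => i.elim0, fun c _ i => i.elim0⟩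
  obtain ⟨V, G, h1, hind, hsup, hG, hFsum⟩ := hDS
  have hGne : ∀ j, G j ≠ 0 := fun j => (hG j).1
  have hGhom : ∀ j, (G j).IsHomogeneous d := fun j => (hG j).2.1
  have hGmem : ∀ j, G j ∈ Algebra.adjoin ℂ ((V j : Set (MvPolynomial (Fin n) ℂ))) :=
    fun j => (hG j).2.2
  -- linear independence of the G j
  have hli : LinearIndependent ℂ G := by
    rw [Fintype.linearIndependent_iff]
    intro g hg i
    have hz := indep_sum_eq_zero V h1 hind (k := d) (by omega)
      (fun j => g j • G j)
      (fun j => Subalgebra.smul_mem _ (hGmem j) _)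
      (fun j => by
        show (g j • G j).IsHomogeneous d
        rw [smul_eq_C_mul]; exact (hGhom j).C_mul _)
      hg i
    rcases smul_eq_zero.mp hz with h | h
    · exact h
    · exact absurd h (hGne i)
  -- dual functionals
  obtain ⟨Gc, hGc⟩ := (Submodule.span ℂ (Set.range G)).exists_isCompl
  set π := Submodule.linearProjOfIsCompl _ Gc hGc with hπdef
  set bas := Module.Basis.span hli with hbas
  set lam : Fin s → (MvPolynomial (Fin n) ℂ →ₗ[ℂ] ℂ) :=
    fun j => (bas.coord j).comp π with hlamdef
  have hlam : ∀ j k, lam j (G k) = if k = j then 1 else 0 := by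
    intro j k
    have hmem : G k ∈ Submodule.span ℂ (Set.range G) :=
      Submodule.subset_span ⟨k, rfl⟩
    have hπGk : π (G k) = ⟨G k, hmem⟩ :=
      Submodule.linearProjOfIsCompl_apply_left hGc ⟨G k, hmem⟩
    have hbk : (⟨G k, hmem⟩ : Submodule.span ℂ (Set.range G)) = bas k := by
      apply Subtype.ext
      rw [hbas, Module.Basis.span_apply]
    show (bas.coord j) (π (G k)) = _
    rw [hπGk, hbk, Module.Basis.coord_apply, Module.Basis.repr_self, Finsupp.single_apply]
  -- the finite set of relevant exponents
  set A : Finset (Fin n →₀ ℕ) := Finset.univ.biUnion (fun k => (G k).support) with hA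
  have hAdeg : ∀ m ∈ A, m.degree = d := by
    intro m hm
    rw [hA] at hm
    obtain ⟨k, _, hk⟩ := Finset.mem_biUnion.mp hm
    rw [Finsupp.degree_eq_weight_one]
    exact (hGhom k) (mem_support_iff.mp hk)
  set Θfam : Fin s → MvPolynomial (Fin n) ℂ := fun j =>
    ∑ m ∈ A, (lam j (monomial m 1) / (∏ i, ((m i).factorial : ℂ))) • monomial m (1:ℂ)
    with hΘfam
  have hfact_ne : ∀ m : Fin n →₀ ℕ, (∏ i, ((m i).factorial : ℂ)) ≠ 0 := by
    intro m
    apply Finset.prod_ne_zero_iff.mpr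
    intro i _
    exact_mod_cast Nat.factorial_ne_zero _
  have hΘhom : ∀ j, (Θfam j).IsHomogeneous d := by
    intro j
    apply IsHomogeneous.sum
    intro m hm
    rw [smul_monomial]
    exact isHomogeneous_monomial _ (hAdeg m hm)
  -- the key pairing values
  have hLval : ∀ j k, coeff 0 (contract (Θfam j) (G k)) = if k = j then 1 else 0 := by
    intro j k
    rw [hΘfam, contract_sum_left, coeff_sum]
    have hterm : ∀ m ∈ A,
        coeff 0 (contract ((lam j (monomial m 1) / (∏ i, ((m i).factorial : ℂ)))
            • monomial m (1:ℂ)) (G k))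
          = lam j (monomial m 1) * coeff m (G k) := by
      intro m _
      rw [contract_smul_left, coeff_smul, smul_eq_mul, contract_monomial, one_smul,
        coeff_opOf, zero_add]
      have hdesc : (∏ jj, (((0 : Fin n →₀ ℕ) jj + m jj).descFactorial (m jj) : ℂ))
          = ∏ jj, ((m jj).factorial : ℂ) := by
        apply Finset.prod_congr rfl
        intro jj _
        rw [Finsupp.coe_zero, Pi.zero_apply, zero_add, Nat.descFactorial_self]
      rw [hdesc]
      have hne := hfact_ne m
      field_simp
    rw [Finset.sum_congr rfl hterm]
    have hswap : ∑ m ∈ A, lam j (monomial m 1) * coeff m (G k)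
        = lam j (∑ m ∈ A, coeff m (G k) • monomial m (1:ℂ)) := by
      rw [map_sum]
      apply Finset.sum_congr rfl
      intro m _
      rw [map_smul, smul_eq_mul]
      ring
    rw [hswap]
    have hGk : ∑ m ∈ A, coeff m (G k) • monomial m (1:ℂ) = G k := by
      have hsub : (G k).support ⊆ A :=
        fun m hm => Finset.mem_biUnion.mpr ⟨k, Finset.mem_univ k, hm⟩
      calc ∑ m ∈ A, coeff m (G k) • monomial m (1:ℂ)
          = ∑ m ∈ A, monomial m (coeff m (G k)) :=
            Finset.sum_congr rfl (fun m _ => by rw [smul_monomial, smul_eq_mul, mul_one])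
        _ = ∑ m ∈ (G k).support, monomial m (coeff m (G k)) :=
            (Finset.sum_subset hsub (fun m _ hm => by
              rw [notMem_support_iff.mp hm, map_zero])).symm
        _ = G k := ((G k).as_sum).symm
    rw [hGk, hlam]
  -- contract (Θfam j) F = C 1
  have hconst : ∀ j, contract (Θfam j) F = C 1 := by
    intro j
    rw [hFsum, contract_sum_right]
    have hterms : ∀ k ∈ Finset.univ, contract (Θfam j) (G k) = C (if k = j then 1 else 0) := by
      intro k _
      rw [contract_eq_C (hΘhom j) (hGhom k), hLval]
    rw [Finset.sum_congr rfl hterms, ← map_sum]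
    congr 1
    simp
  -- claim: contractions of F^⊥ elements against G k are constants
  have hC3 : ∀ ψ ∈ apolarIdeal F, ∀ k, ∃ c : ℂ, contract ψ (G k) = C c := by
    intro ψ hψ k
    have hψ0 : contract ψ F = 0 := hψ
    set N := ψ.totalDegree with hN
    have hcomp0 : ∀ e, contract (homogeneousComponent e ψ) F = 0 := by
      intro e
      rcases lt_or_ge d e with hlt | hle
      · exact contract_eq_zero_of_lt (homogeneousComponent_isHomogeneous e ψ) hF hlt
      · by_cases heN : e ∈ Finset.range (N + 1)
        · have hsum2 : ∑ e' ∈ Finset.range (N+1),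
              homogeneousComponent (d-e) (contract (homogeneousComponent e' ψ) F) = 0 := by
            rw [← map_sum, ← contract_sum_left, sum_homogeneousComponent, hψ0, map_zero]
          rw [Finset.sum_eq_single_of_mem e heN (fun e' _ hne => ?_)] at hsum2
          · have hhome : (contract (homogeneousComponent e ψ) F).IsHomogeneous (d - e) :=
              contract_isHomogeneous (homogeneousComponent_isHomogeneous e ψ) hF
            rwa [homogeneousComponent_of_mem
              ((mem_homogeneousSubmodule _ _).mpr hhome), if_pos rfl] at hsum2
          · rcases lt_or_ge d e' with hlt' | hle'
            · rw [contract_eq_zero_of_lt (homogeneousComponent_isHomogeneous e' ψ) hF hlt',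
                map_zero]
            · have hhom' : (contract (homogeneousComponent e' ψ) F).IsHomogeneous (d - e') :=
                contract_isHomogeneous (homogeneousComponent_isHomogeneous e' ψ) hF
              rw [homogeneousComponent_of_mem
                ((mem_homogeneousSubmodule _ _).mpr hhom'), if_neg (by omega)]
        · have hzc : homogeneousComponent e ψ = 0 := by
            apply homogeneousComponent_eq_zero
            simp only [Finset.mem_range] at heN
            omega
          rw [hzc, contract_zero_left]
    have hterm : ∀ e : ℕ, ∃ c : ℂ, contract (homogeneousComponent e ψ) (G k) = C c := by
      intro e
      rcases lt_trichotomy e d with hlt | rfl | hgt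
      · refine ⟨0, ?_⟩
        have hzero : contract (homogeneousComponent e ψ) (G k) = 0 := by
          apply indep_sum_eq_zero V h1 hind (k := d - e) (by omega)
            (fun j => contract (homogeneousComponent e ψ) (G j))
            (fun j => contract_mem_adjoin (h1 j) _ (hGmem j))
            (fun j => contract_isHomogeneous (homogeneousComponent_isHomogeneous e ψ) (hGhom j))
            ?_ k
          rw [← contract_sum_right, ← hFsum]
          exact hcomp0 e
        rw [hzero, map_zero]
      · exact ⟨_, contract_eq_C (homogeneousComponent_isHomogeneous e ψ) (hGhom k)⟩
      · exact ⟨0, by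
          rw [contract_eq_zero_of_lt (homogeneousComponent_isHomogeneous e ψ) (hGhom k) hgt,
            map_zero]⟩
    choose cfun hcfun using hterm
    refine ⟨∑ e ∈ Finset.range (N+1), cfun e, ?_⟩
    conv_lhs => rw [show ψ = ∑ e ∈ Finset.range (N+1), homogeneousComponent e ψ from
      (sum_homogeneousComponent ψ).symm]
    rw [contract_sum_left, map_sum]
    exact Finset.sum_congr rfl (fun e _ => hcfun e)
  -- the pairing functionals vanish on m * F^⊥
  have hLzero : ∀ Ξ, Ξ ∈ irrIdeal n * apolarIdeal F →
      ∀ k, coeff 0 (contract Ξ (G k)) = 0 := by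
    intro Ξ hΞ k
    refine Submodule.mul_induction_on hΞ (fun θ hθ ψ hψ => ?_) (fun x y hx hy => ?_)
    · obtain ⟨c, hc⟩ := hC3 ψ hψ k
      rw [contract_mul, hc, coeff_contract]
      apply Finset.sum_eq_zero
      intro b _
      rcases eq_or_ne b 0 with rfl | hbne
      · rw [constantCoeff_of_mem_irr hθ, zero_mul]
      · rw [zero_add, coeff_C, if_neg (Ne.symm hbne), mul_zero, mul_zero]
    · rw [contract_add_left, coeff_add, hx, hy, add_zero]
  -- assemble the family
  set J : Fin (s-1) → Fin s := fun i => ⟨i.1+1, by omega⟩ with hJ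
  set z : Fin s := ⟨0, hs⟩ with hz0
  refine ⟨fun i => Θfam (J i) - Θfam z, fun i => ⟨?_, ?_⟩, ?_⟩
  · show contract (Θfam (J i) - Θfam z) F = 0
    rw [contract_sub_left, hconst, hconst, sub_self]
  · exact (hΘhom (J i)).sub (hΘhom z)
  · intro c hc i0
    have h0 := hLzero _ hc (J i0)
    rw [contract_sum_left, coeff_sum] at h0
    have hexp : ∀ i ∈ Finset.univ,
        coeff 0 (contract (c i • (Θfam (J i) - Θfam z)) (G (J i0)))
          = c i * (if i = i0 then 1 else 0) := by
      intro i _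
      rw [contract_smul_left, coeff_smul, smul_eq_mul, contract_sub_left, coeff_sub,
        hLval (J i) (J i0), hLval z (J i0)]
      have hJz : J i0 ≠ z := by
        intro h
        have := congrArg Fin.val h
        rw [hJ, hz0] at this
        simp at this
      have hJinj : J i0 = J i → i = i0 := by
        intro h
        have hv := congrArg Fin.val h
        rw [hJ] at hv
        simp only [] at hv
        apply Fin.ext
        omega
      rw [if_neg hJz, sub_zero]
      congr 1
      by_cases h : i = i0
      · subst h; rw [if_pos rfl, if_pos rfl]
      · rw [if_neg (fun hh => h (hJinj hh)), if_neg h]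
    rw [Finset.sum_congr rfl hexp] at h0
    simpa using h0
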